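/- Let p > 1 and let t > 1 be a real number satisfying t² = √(2p/(p+1)) · (2t − 1). Then (p+1)² · L(2t) = 32p(p−1)(1 − 2t), where L(s) = s⁴ − (32p/(p+1))s² + (32p(p+3)/(p+1)²)s − 64p/(p+1)². In particular L(2t) < 0. -/

import Mathlib

/-- The quartic polynomial `L`. -/
noncomputable def Lpoly (p s : ℝ) : ℝ :=
  s ^ 4 - 32 * p / (p + 1) * s ^ 2 + 32 * p * (p + 3) / (p + 1) ^ 2 * s
    - 64 * p / (p + 1) ^ 2

/-- `t₀ = √(2p/(p+1)) + √(2p/(p+1) − √(2p/(p+1)))`. -/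
noncomputable def t0 (p : ℝ) : ℝ :=
  Real.sqrt (2 * p / (p + 1)) +
    Real.sqrt (2 * p / (p + 1) - Real.sqrt (2 * p / (p + 1)))

/-- The quartic polynomial `H` from Theorem 1.1. -/
noncomputable def Hpoly (p x : ℝ) : ℝ :=
  x ^ 4 - 32 * p * (p + 1) / (p - 1) ^ 2 * x ^ 2
    + 32 * p * (p + 1) * (p + 3) / (p - 1) ^ 3 * x
    - 64 * p * (p + 1) ^ 2 / (p - 1) ^ 4
/-- If `t > 1` satisfies `t² = √(2p/(p+1))(2t−1)`, then
`(p+1)² L(2t) = 32p(p−1)(1−2t)`; in particular `L(2t) < 0`. -/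
theorem Lpoly_at_two_t (p : ℝ) (hp : 1 < p) (t : ℝ) (ht1 : 1 < t)
    (ht : t ^ 2 = Real.sqrt (2 * p / (p + 1)) * (2 * t - 1)) :
    (p + 1) ^ 2 * Lpoly p (2 * t) = 32 * p * (p - 1) * (1 - 2 * t)
      ∧ Lpoly p (2 * t) < 0 := by
  have hp1 : (0:ℝ) < p + 1 := by linarith
  have ha : Real.sqrt (2 * p / (p + 1)) ^ 2 = 2 * p / (p + 1) :=
    Real.sq_sqrt (by positivity)
  have h4 : t ^ 4 = 2 * p / (p + 1) * (2 * t - 1) ^ 2 := by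
    have : (t ^ 2) ^ 2 = (Real.sqrt (2 * p / (p + 1)) * (2 * t - 1)) ^ 2 := by
      rw [ht]
    calc t ^ 4 = (t ^ 2) ^ 2 := by ring
    _ = Real.sqrt (2 * p / (p + 1)) ^ 2 * (2 * t - 1) ^ 2 := by rw [this]; ring
    _ = 2 * p / (p + 1) * (2 * t - 1) ^ 2 := by rw [ha]
  have key : (p + 1) ^ 2 * Lpoly p (2 * t) = 32 * p * (p - 1) * (1 - 2 * t) := by
    have hne : p + 1 ≠ 0 := ne_of_gt hp1
    have h4' : (p+1) * t^4 = 2*p*(2*t-1)^2 := by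
      field_simp at h4; linarith [h4]
    unfold Lpoly
    field_simp
    linear_combination (16*(p+1)) * h4'
  refine ⟨key, ?_⟩
  have hrhs : 32 * p * (p - 1) * (1 - 2 * t) < 0 :=
    mul_neg_of_pos_of_neg (by nlinarith) (by linarith)
  nlinarith [key, hrhs, pow_pos hp1 2]
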